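/- arXiv:1809.02856 — 4 statements merged into one kernel-verified Lean document; each statement's English description precedes it below -/
import Mathlib

section
/- Let z be a real number with 0 < z < 1 and let s be a positive natural number. Then the polylogarithm of negative integer order −s at z satisfies Li_{−s}(z) = ∑_{k=1}^∞ k^s z^k = (1/ln z)^s · g^{(s)}(1), where g^{(s)}(1) denotes the s-th derivative at x = 1 of the function g(x) = −z^x/(z^x − 1) = z^x/(1 − z^x). -/
private lemma aux_summable_pow_geo (m : ℕ) (q : ℝ) (hq : ‖q‖ < 1) :
    Summable fun k : ℕ => ((k : ℝ) + 1) ^ m * q ^ (k + 1) := by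
  have h := (summable_pow_mul_geometric_of_norm_lt_one m hq).comp_injective Nat.succ_injective
  refine h.congr fun k => ?_
  simp [Function.comp, Nat.succ_eq_add_one]

/-- For `0 < z < 1` and positive natural `s`, the polylogarithm of negative order `-s`,
`Li_{-s}(z) = ∑_{k=1}^∞ k^s z^k`, equals `(1/ln z)^s` times the `s`-th derivative at `x = 1`
of `g(x) = z^x / (1 - z^x)`. -/
theorem polylog_neg_order_eq_deriv (z : ℝ) (hz0 : 0 < z) (hz1 : z < 1)
    (s : ℕ) (hs : 0 < s) :
    ∑' k : ℕ, ((k : ℝ) + 1) ^ s * z ^ (k + 1) =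
      (1 / Real.log z) ^ s *
        iteratedDeriv s (fun x : ℝ => z ^ x / (1 - z ^ x)) 1 := by
  set c := Real.log z with hc_def
  have hc : c < 0 := Real.log_neg hz0 hz1
  set F : ℕ → ℝ → ℝ := fun n x => ∑' k : ℕ, (((k : ℝ) + 1) * c) ^ n * Real.exp (c * x) ^ (k + 1)
    with hF
  set T : Set ℝ := Set.Ioi (1/2 : ℝ) with hT
  -- exp (c*x) ∈ (0,1) for x > 0
  have hq1 : ∀ x : ℝ, 0 < x → Real.exp (c * x) < 1 := by
    intro x hx
    rw [Real.exp_lt_one_iff]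
    exact mul_neg_of_neg_of_pos hc hx
  -- summability of the n-th term series at any x > 0
  have hsum : ∀ (n : ℕ) (x : ℝ), 0 < x →
      Summable fun k : ℕ => (((k : ℝ) + 1) * c) ^ n * Real.exp (c * x) ^ (k + 1) := by
    intro n x hx
    have h1 : Summable fun k : ℕ => ((k : ℝ) + 1) ^ n * Real.exp (c * x) ^ (k + 1) := by
      refine aux_summable_pow_geo n _ ?_
      rw [Real.norm_eq_abs, abs_of_pos (Real.exp_pos _)]
      exact hq1 x hx
    refine ((h1.mul_left (c ^ n)).congr fun k => ?_)
    rw [mul_pow]; ring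
  -- derivative of each term
  have hderiv : ∀ (n k : ℕ) (x : ℝ),
      HasDerivAt (fun y => (((k : ℝ) + 1) * c) ^ n * Real.exp (c * y) ^ (k + 1))
        ((((k : ℝ) + 1) * c) ^ (n + 1) * Real.exp (c * x) ^ (k + 1)) x := by
    intro n k x
    have h1 : HasDerivAt (fun y : ℝ => Real.exp (c * y)) (Real.exp (c * x) * c) x := by
      simpa using ((hasDerivAt_id x).const_mul c).exp
    have h2 := (h1.pow (k + 1)).const_mul ((((k : ℝ) + 1) * c) ^ n)
    convert h2 using 1
    · rfl
    · rfl
    · rfl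
    push_cast
    rw [pow_succ (((k : ℝ) + 1) * c) n, pow_succ (Real.exp (c * x)) k]
    ring
  -- termwise differentiation on T
  have hF_deriv : ∀ (n : ℕ) (x : ℝ), x ∈ T → HasDerivAt (F n) (F (n + 1) x) x := by
    intro n x hx
    have hhalf : (0:ℝ) < 1/2 := by norm_num
    refine hasDerivAt_tsum_of_isPreconnected
      (u := fun k : ℕ => |c| ^ (n + 1) * (((k : ℝ) + 1) ^ (n + 1) * Real.exp (c * (1/2)) ^ (k + 1)))
      ?_ isOpen_Ioi isPreconnected_Ioi (fun k y _ => hderiv n k y) ?_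
      (show (1:ℝ) ∈ T by norm_num [hT]) ?_ hx
    · refine Summable.mul_left _ (aux_summable_pow_geo (n + 1) _ ?_)
      rw [Real.norm_eq_abs, abs_of_pos (Real.exp_pos _)]
      exact hq1 _ hhalf
    · intro k y hy
      have hy' : (1/2 : ℝ) ≤ y := le_of_lt hy
      have hcy : c * y ≤ c * (1/2) := by nlinarith
      have hexp : Real.exp (c * y) ≤ Real.exp (c * (1/2)) := Real.exp_le_exp.mpr hcy
      have hpow : Real.exp (c * y) ^ (k + 1) ≤ Real.exp (c * (1/2)) ^ (k + 1) :=
        pow_le_pow_left₀ (le_of_lt (Real.exp_pos _)) hexp (k + 1)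
      rw [Real.norm_eq_abs, abs_mul, abs_pow, abs_mul, abs_pow,
        abs_of_pos (Real.exp_pos _), abs_of_pos (show (0:ℝ) < (k:ℝ)+1 by positivity), mul_pow]
      nlinarith [mul_le_mul_of_nonneg_left hpow
        (show (0:ℝ) ≤ ((k:ℝ)+1) ^ (n+1) * |c| ^ (n+1) by positivity)]
    · exact hsum n 1 one_pos
  -- base case: g = F 0 on T
  have hbase : ∀ x : ℝ, x ∈ T → z ^ x / (1 - z ^ x) = F 0 x := by
    intro x hx
    have hxpos : (0:ℝ) < x := lt_trans (by norm_num) hx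
    have hzx : z ^ x = Real.exp (c * x) := by
      rw [Real.rpow_def_of_pos hz0]
    set q : ℝ := Real.exp (c * x) with hqdef
    have hq0 : 0 < q := Real.exp_pos _
    have hql : q < 1 := hq1 x hxpos
    rw [hzx, hF]
    simp only [pow_zero, one_mul]
    have hgeo : ∑' k : ℕ, q ^ (k + 1) = q / (1 - q) := by
      have : ∑' k : ℕ, q ^ (k + 1) = q * ∑' k : ℕ, q ^ k := by
        rw [← tsum_mul_left]
        exact tsum_congr fun k => by ring
      rw [this, tsum_geometric_of_lt_one (le_of_lt hq0) hql, div_eq_mul_inv]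
    rw [hgeo]
  -- main induction
  have key : ∀ (n : ℕ) (x : ℝ), x ∈ T →
      iteratedDeriv n (fun x : ℝ => z ^ x / (1 - z ^ x)) x = F n x := by
    intro n
    induction n with
    | zero => intro x hx; simpa using hbase x hx
    | succ n ih =>
      intro x hx
      rw [iteratedDeriv_succ]
      have heq : iteratedDeriv n (fun x : ℝ => z ^ x / (1 - z ^ x)) =ᶠ[nhds x] F n :=
        Filter.eventuallyEq_of_mem (isOpen_Ioi.mem_nhds hx) ih
      rw [heq.deriv_eq]
      exact (hF_deriv n x hx).deriv
  have h1 : iteratedDeriv s (fun x : ℝ => z ^ x / (1 - z ^ x)) 1 = F s 1 :=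
    key s 1 (by norm_num [hT])
  rw [h1]
  have hexpc : Real.exp (c * 1) = z := by rw [mul_one, hc_def, Real.exp_log hz0]
  have hFs : F s 1 = c ^ s * ∑' k : ℕ, ((k : ℝ) + 1) ^ s * z ^ (k + 1) := by
    rw [hF]
    simp only [hexpc]
    rw [← tsum_mul_left]
    exact tsum_congr fun k => by rw [mul_pow]; ring
  rw [hFs, one_div, inv_pow, inv_mul_cancel_left₀ (pow_ne_zero s (ne_of_lt hc))]
end

section
/- Let z be a real number with z > 0 and z ≠ 1, let b be a positive natural number, and let s be a natural number. Then the finite sum ∑_{k=1}^b k^s z^k equals (1/ln z)^s times the s-th derivative, evaluated at x = 1, of the function F(x) = z^x (z^{bx} − 1)/(z^x − 1). -/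
lemma aux_iter_sum_exp (t : Finset ℕ) (c : ℕ → ℝ) (s : ℕ) :
    iteratedDeriv s (fun x => ∑ k ∈ t, Real.exp (c k * x)) =
      fun x => ∑ k ∈ t, (c k) ^ s * Real.exp (c k * x) := by
  induction s with
  | zero => simp
  | succ n ih =>
    rw [iteratedDeriv_succ, ih]
    funext x
    have h : ∀ k ∈ t, HasDerivAt (fun x => (c k) ^ n * Real.exp (c k * x))
        ((c k) ^ (n + 1) * Real.exp (c k * x)) x := by
      intro k _
      have h1 : HasDerivAt (fun x => Real.exp (c k * x)) (Real.exp (c k * x) * c k) x := by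
        simpa [Function.comp_def] using (Real.hasDerivAt_exp (c k * x)).comp x ((hasDerivAt_id x).const_mul (c k))
      have h2 := h1.const_mul ((c k) ^ n)
      rw [show (c k) ^ (n + 1) * Real.exp (c k * x) = (c k) ^ n * (Real.exp (c k * x) * c k) by ring]
      exact h2
    exact (HasDerivAt.fun_sum h).deriv

/-- For `z > 0`, `z ≠ 1`, a positive natural `b` and a natural `s`, the finite sum
`∑_{k=1}^b k^s z^k` equals `(1/ln z)^s` times the `s`-th derivative at `x = 1` of
`F(x) = z^x (z^(b x) - 1) / (z^x - 1)`. -/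
theorem finite_sum_eq_deriv (z : ℝ) (hz0 : 0 < z) (hz1 : z ≠ 1)
    (b : ℕ) (hb : 0 < b) (s : ℕ) :
    ∑ k ∈ Finset.Icc 1 b, (k : ℝ) ^ s * z ^ k =
      (1 / Real.log z) ^ s *
        iteratedDeriv s (fun x : ℝ => z ^ x * (z ^ ((b : ℝ) * x) - 1) / (z ^ x - 1)) 1 := by
  set L := Real.log z with hLdef
  have hL : L ≠ 0 := by
    intro h
    rcases Real.log_eq_zero.1 h with h | h | h <;> [linarith; exact hz1 h; linarith]
  have heq : (fun x : ℝ => z ^ x * (z ^ ((b : ℝ) * x) - 1) / (z ^ x - 1)) =ᶠ[nhds 1]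
      (fun x => ∑ k ∈ Finset.Icc 1 b, Real.exp (((k : ℝ) * L) * x)) := by
    filter_upwards [eventually_gt_nhds (show (0:ℝ) < 1 by norm_num)] with x hx
    have hw0 : 0 < z ^ x := Real.rpow_pos_of_pos hz0 x
    have hw1 : z ^ x ≠ 1 := by
      intro h
      have hxl : x * L = 0 := by
        rw [hLdef, ← Real.log_rpow hz0, h, Real.log_one]
      rcases mul_eq_zero.1 hxl with h' | h'
      · linarith
      · exact hL h'
    have hterm : ∀ k : ℕ, Real.exp (((k : ℝ) * L) * x) = (z ^ x) ^ k := by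
      intro k
      rw [show ((k : ℝ) * L) * x = (k : ℝ) * (L * x) by ring, Real.exp_nat_mul]
      congr 1
      rw [Real.rpow_def_of_pos hz0]
    have hbx : z ^ ((b : ℝ) * x) = (z ^ x) ^ b := by
      rw [mul_comm, Real.rpow_mul hz0.le, Real.rpow_natCast]
    simp only [hterm, hbx]
    have hgeom : ∑ k ∈ Finset.Icc 1 b, (z ^ x) ^ k =
        ((z ^ x) ^ (b + 1) - (z ^ x) ^ 1) / (z ^ x - 1) := by
      rw [show Finset.Icc 1 b = Finset.Ico 1 (b + 1) by rw [Finset.Ico_add_one_right_eq_Icc]]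
      exact geom_sum_Ico hw1 (by omega)
    rw [hgeom]
    have hne : z ^ x - 1 ≠ 0 := sub_ne_zero.2 hw1
    field_simp
    ring
  rw [Filter.EventuallyEq.iteratedDeriv_eq s heq, aux_iter_sum_exp, Finset.mul_sum]
  refine Finset.sum_congr rfl fun k hk => ?_
  have hexp : Real.exp (((k : ℝ) * L) * 1) = z ^ k := by
    rw [mul_one, Real.exp_nat_mul, hLdef, Real.exp_log hz0]
  rw [hexp, ← mul_assoc, ← mul_pow]
  congr 2
  field_simp
end

section
/- Let z be a real number with 0 < z < 1 and let s be a natural number. Then the s-th iterated derivative at x = 1 of the function H(x) = ∑_{k=1}^∞ z^{kx} (which converges for all x > 0) equals (ln z)^s · ∑_{k=1}^∞ k^s z^k. -/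
open Real Set Filter

section aux
variable {z : ℝ}

lemma term_hasDerivAt (hz0 : 0 < z) (k s : ℕ) (y : ℝ) :
    HasDerivAt (fun y : ℝ => (((k : ℝ) + 1) * Real.log z) ^ s * z ^ (((k : ℝ) + 1) * y))
      ((((k : ℝ) + 1) * Real.log z) ^ (s + 1) * z ^ (((k : ℝ) + 1) * y)) y := by
  have h1 : HasDerivAt (fun y : ℝ => Real.log z * (((k : ℝ) + 1) * y))
      (Real.log z * ((k : ℝ) + 1)) y := by
    simpa using (((hasDerivAt_id y).const_mul ((k : ℝ) + 1)).const_mul (Real.log z))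
  have h2 := (h1.exp).const_mul ((((k : ℝ) + 1) * Real.log z) ^ s)
  have heq : (fun y : ℝ => (((k : ℝ) + 1) * Real.log z) ^ s * Real.exp (Real.log z * (((k : ℝ) + 1) * y)))
      = fun y : ℝ => (((k : ℝ) + 1) * Real.log z) ^ s * z ^ (((k : ℝ) + 1) * y) := by
    funext y
    rw [Real.rpow_def_of_pos hz0]
  rw [heq] at h2
  refine h2.congr_deriv ?_
  rw [Real.rpow_def_of_pos hz0]
  ring

lemma term_bound (hz0 : 0 < z) (hz1 : z < 1) (k s : ℕ) {y : ℝ} (hy : (1:ℝ)/2 < y) :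
    ‖(((k : ℝ) + 1) * Real.log z) ^ s * z ^ (((k : ℝ) + 1) * y)‖
      ≤ (((k : ℝ) + 1) * |Real.log z|) ^ s * (z ^ ((1:ℝ)/2)) ^ (k + 1) := by
  rw [norm_mul, norm_pow, norm_mul, Real.norm_eq_abs ((k:ℝ)+1), Real.norm_eq_abs,
    abs_of_nonneg (show (0:ℝ) ≤ (k:ℝ)+1 by positivity)]
  gcongr
  rw [Real.norm_eq_abs, abs_of_nonneg (Real.rpow_nonneg hz0.le _),
    ← Real.rpow_natCast (z ^ ((1:ℝ)/2)) (k+1), ← Real.rpow_mul hz0.le]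
  apply Real.rpow_le_rpow_of_exponent_ge hz0 hz1.le
  push_cast
  nlinarith [Nat.cast_nonneg (α := ℝ) k]

set_option maxHeartbeats 1000000 in
lemma bound_summable (hz0 : 0 < z) (hz1 : z < 1) (s : ℕ) :
    Summable (fun k : ℕ => (((k : ℝ) + 1) * |Real.log z|) ^ s * (z ^ ((1:ℝ)/2)) ^ (k + 1)) := by
  have hw0 : (0:ℝ) ≤ z ^ ((1:ℝ)/2) := Real.rpow_nonneg hz0.le _
  have hw1 : z ^ ((1:ℝ)/2) < 1 := Real.rpow_lt_one hz0.le hz1 (by norm_num)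
  have h : Summable (fun n : ℕ => (n:ℝ)^s * (z ^ ((1:ℝ)/2))^n) :=
    summable_pow_mul_geometric_of_norm_lt_one s
      (by rwa [Real.norm_eq_abs, abs_of_nonneg hw0])
  have h2 : Summable (fun k : ℕ => ((k+1 : ℕ) : ℝ) ^ s * (z ^ ((1:ℝ)/2)) ^ (k+1)) :=
    (summable_nat_add_iff 1).2 h
  have := h2.mul_left (|Real.log z| ^ s)
  apply this.congr
  intro k
  push_cast
  rw [mul_pow]
  ring
end aux

lemma key (hz0 : 0 < z) (hz1 : z < 1) : ∀ s : ℕ, ∀ x ∈ Set.Ioi ((1:ℝ)/2),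
    iteratedDeriv s (fun x : ℝ => ∑' k : ℕ, z ^ (((k : ℝ) + 1) * x)) x
      = ∑' k : ℕ, (((k : ℝ) + 1) * Real.log z) ^ s * z ^ (((k : ℝ) + 1) * x) := by
  intro s
  induction s with
  | zero => intro x hx; simp
  | succ s ih =>
    intro x hx
    rw [iteratedDeriv_succ]
    have hev : iteratedDeriv s (fun x : ℝ => ∑' k : ℕ, z ^ (((k : ℝ) + 1) * x)) =ᶠ[nhds x]
        (fun y => ∑' k : ℕ, (((k : ℝ) + 1) * Real.log z) ^ s * z ^ (((k : ℝ) + 1) * y)) :=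
      Filter.eventually_of_mem (isOpen_Ioi.mem_nhds hx) ih
    rw [hev.deriv_eq]
    exact (hasDerivAt_tsum_of_isPreconnected (bound_summable hz0 hz1 (s+1)) isOpen_Ioi
      isPreconnected_Ioi (fun k y _ => term_hasDerivAt hz0 k s y)
      (fun k y hy => term_bound hz0 hz1 k (s+1) hy)
      (show (1:ℝ) ∈ Set.Ioi ((1:ℝ)/2) by norm_num)
      (Summable.of_norm_bounded (bound_summable hz0 hz1 s)
        (fun k => term_bound hz0 hz1 k s (by norm_num))) hx).deriv

/-- For `0 < z < 1` and natural `s`, the `s`-th iterated derivative at `x = 1` of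
`H(x) = ∑_{k=1}^∞ z^(k x)` equals `(ln z)^s · ∑_{k=1}^∞ k^s z^k`. -/
theorem iteratedDeriv_tsum_geom (z : ℝ) (hz0 : 0 < z) (hz1 : z < 1) (s : ℕ) :
    iteratedDeriv s (fun x : ℝ => ∑' k : ℕ, z ^ (((k : ℝ) + 1) * x)) 1 =
      Real.log z ^ s * ∑' k : ℕ, ((k : ℝ) + 1) ^ s * z ^ (k + 1) := by
  rw [key hz0 hz1 s 1 (by norm_num), ← tsum_mul_left]
  congr 1
  funext k
  rw [mul_one, mul_pow]
  have : z ^ ((k : ℝ) + 1) = z ^ (k + 1) := by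
    rw [show ((k : ℝ) + 1) = ((k + 1 : ℕ) : ℝ) by push_cast; ring, Real.rpow_natCast]
  rw [this]
  ring
end

section
/- Let f : ℝ → ℝ be n-times continuously differentiable on ℝ, let x be a real number, and let n be a natural number. Then the central finite difference quotient converges to the n-th derivative: lim_{h→0} (1/h^n) · ∑_{i=0}^n (−1)^i · C(n,i) · f(x + (n/2 − i)·h) = f^{(n)}(x). -/
open Filter
open Finset fwdDiff Polynomial Asymptotics


lemma hasse_eval_of_le {p : ℝ[X]} {m : ℕ} (hm : p.natDegree ≤ m) (h : ℝ) :
    (hasseDeriv m p).eval h = p.coeff m := by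
  have hd : (hasseDeriv m p).natDegree ≤ 0 := le_trans (natDegree_hasseDeriv_le p m) (by omega)
  rw [eq_C_of_natDegree_le_zero hd, eval_C, hasseDeriv_coeff m p 0, zero_add, Nat.choose_self,
    Nat.cast_one, one_mul]

lemma fwdDiff_iter_poly (h : ℝ) : ∀ (n : ℕ) (p : ℝ[X]), p.natDegree ≤ n → ∀ y : ℝ,
    (Δ_[h])^[n] (fun t => p.eval t) y = n.factorial * h ^ n * p.coeff n := by
  intro n
  induction n with
  | zero =>
    intro p hp y
    rw [eq_C_of_natDegree_le_zero hp]; simp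
  | succ n IH =>
    intro p hp y
    rw [Function.iterate_succ_apply]
    set q : ℝ[X] := Polynomial.taylor h p - p with hq
    have hΔ : Δ_[h] (fun t => p.eval t) = fun t => q.eval t := by
      funext t
      simp [fwdDiff, hq, taylor_apply, eval_comp]
    have hqd : q.natDegree ≤ n := by
      rw [natDegree_le_iff_coeff_eq_zero]
      intro N hN
      have hpN : p.natDegree ≤ N := le_trans hp hN
      rw [hq, coeff_sub, taylor_coeff, hasse_eval_of_le hpN, sub_self]
    have hqc : q.coeff n = (n + 1 : ℝ) * h * p.coeff (n + 1) := by
      have hd1 : (hasseDeriv n p).natDegree ≤ 1 := le_trans (natDegree_hasseDeriv_le p n) (by omega)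
      rw [hq, coeff_sub, taylor_coeff, eq_X_add_C_of_natDegree_le_one hd1]
      rw [hasseDeriv_coeff n p 0, hasseDeriv_coeff n p 1, zero_add, Nat.choose_self]
      simp only [eval_add, eval_mul, eval_C, eval_X, Nat.cast_one, one_mul]
      have : (1 + n).choose n = n + 1 := by
        rw [add_comm]; exact Nat.choose_succ_self_right n
      rw [this]
      push_cast
      ring
    rw [hΔ, IH q hqd y, hqc, Nat.factorial_succ]
    push_cast
    ring

lemma central_sum_pow (n k : ℕ) (hk : k ≤ n) :
    ∑ i ∈ range (n + 1), (-1 : ℝ) ^ i * (n.choose i : ℝ) * ((n : ℝ) / 2 - (i : ℝ)) ^ k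
      = if k = n then (n.factorial : ℝ) else 0 := by
  have key := fwdDiff_iter_eq_sum_shift (1 : ℝ) (fun t : ℝ => t ^ k) n (-(n : ℝ) / 2)
  have hpoly := fwdDiff_iter_poly (1 : ℝ) n (Polynomial.X ^ k)
    (by simp [Polynomial.natDegree_X_pow]; omega) (-(n : ℝ) / 2)
  simp only [Polynomial.eval_pow, Polynomial.eval_X] at hpoly
  rw [hpoly] at key
  have hflip : ∑ i ∈ range (n + 1), (-1 : ℝ) ^ i * (n.choose i : ℝ) * ((n : ℝ) / 2 - (i : ℝ)) ^ k
      = ∑ j ∈ range (n + 1), ((-1 : ℤ) ^ (n - j) * (n.choose j : ℤ)) •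
          (-(n : ℝ) / 2 + (j : ℕ) • (1 : ℝ)) ^ k := by
    rw [← Finset.sum_range_reflect]
    refine Finset.sum_congr rfl fun j hj => ?_
    rw [Finset.mem_range] at hj
    have hj' : j ≤ n := by omega
    have e1 : n + 1 - 1 - j = n - j := by omega
    rw [e1, Nat.choose_symm hj']
    simp only [zsmul_eq_mul, nsmul_eq_mul, mul_one]
    push_cast [Nat.cast_sub hj']
    ring
  rw [hflip, ← key, (Polynomial.coeff_X_pow k n)]
  by_cases h : k = n
  · subst h; simp
  · have : ¬ (n = k) := fun hh => h hh.symm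
    simp [h, this]


lemma taylor_peano (n : ℕ) : ∀ (f : ℝ → ℝ), ContDiff ℝ n f → ∀ x : ℝ,
    (fun t : ℝ => f (x + t) - ∑ k ∈ range (n + 1), iteratedDeriv k f x * t ^ k / k.factorial)
      =o[nhds 0] fun t : ℝ => t ^ n := by
  induction n with
  | zero =>
    intro f hf x
    simp only [range_one, sum_singleton, iteratedDeriv_zero, pow_zero, Nat.factorial_zero,
      Nat.cast_one, mul_one, div_one]
    rw [isLittleO_one_iff]
    have : Filter.Tendsto (fun t : ℝ => f (x + t)) (nhds 0) (nhds (f x)) := by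
      have h1 : Filter.Tendsto (fun t : ℝ => x + t) (nhds 0) (nhds x) := by
        simpa using (continuous_add_left x).tendsto (0 : ℝ)
      exact (hf.continuous.tendsto x).comp h1
    simpa using this.sub_const (f x)
  | succ n IH =>
    intro f hf x
    have hf' : Differentiable ℝ f ∧ ContDiff ℝ n (deriv f) := by
      have : ContDiff ℝ ((n : WithTop ℕ∞) + 1) f := by exact_mod_cast hf
      have h2 := (contDiff_succ_iff_deriv.mp this)
      exact ⟨h2.1, h2.2.2⟩
    set g : ℝ → ℝ := fun t =>
      f (x + t) - ∑ k ∈ range (n + 2), iteratedDeriv k f x * t ^ k / k.factorial with hg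
    set φ : ℝ → ℝ := fun t =>
      deriv f (x + t) - ∑ k ∈ range (n + 1), iteratedDeriv k (deriv f) x * t ^ k / k.factorial
      with hφ
    have hφo : φ =o[nhds 0] fun t : ℝ => t ^ n := IH (deriv f) hf'.2 x
    have hg0 : g 0 = 0 := by
      simp only [hg]
      rw [Finset.sum_eq_single 0]
      · simp
      · intro k _ hk
        simp [zero_pow hk]
      · simp
    have hgd : ∀ t : ℝ, HasDerivAt g (φ t) t := by
      intro t
      have h1 : HasDerivAt (fun t : ℝ => f (x + t)) (deriv f (x + t)) t := by
        have := ((hf'.1 (x + t)).hasDerivAt).comp t ((hasDerivAt_id t).const_add x)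
        simpa [Function.comp_def] using this
      have h2 : HasDerivAt (fun t : ℝ => ∑ k ∈ range (n + 2),
          iteratedDeriv k f x * t ^ k / k.factorial)
          (∑ k ∈ range (n + 1), iteratedDeriv k (deriv f) x * t ^ k / k.factorial) t := by
        have h3 : HasDerivAt (fun t : ℝ => ∑ k ∈ range (n + 2),
            iteratedDeriv k f x * t ^ k / k.factorial)
            (∑ k ∈ range (n + 2),
              iteratedDeriv k f x * ((k : ℝ) * t ^ (k - 1)) / k.factorial) t := by
          apply HasDerivAt.fun_sum
          intro k _
          exact ((hasDerivAt_pow k t).const_mul (iteratedDeriv k f x)).div_const _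
        convert h3 using 1
        rw [Finset.sum_range_succ' (fun k => iteratedDeriv k f x * ((k : ℝ) * t ^ (k - 1))
          / k.factorial) (n + 1)]
        simp only [Nat.cast_zero, zero_mul, mul_zero, zero_div, add_zero]
        refine Finset.sum_congr rfl fun j _ => ?_
        rw [← iteratedDeriv_succ']
        rw [Nat.factorial_succ]
        have : ((j + 1 : ℕ) : ℝ) ≠ 0 := by positivity
        push_cast
        field_simp
      exact h1.sub h2
    -- now the MVT argument
    rw [isLittleO_iff]
    intro c hc
    have hev := isLittleO_iff.mp hφo hc
    rw [Metric.eventually_nhds_iff] at hev ⊢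
    obtain ⟨δ, hδ, hbd⟩ := hev
    refine ⟨δ, hδ, fun t ht => ?_⟩
    rw [Real.dist_eq, sub_zero] at ht
    have key : ‖g t - g 0‖ ≤ (c * |t| ^ n) * ‖t - 0‖ := by
      apply Convex.norm_image_sub_le_of_norm_hasDerivWithin_le
        (f' := φ) (s := Set.uIcc 0 t)
      · intro s _
        exact (hgd s).hasDerivWithinAt
      · intro s hs
        have hst : |s| ≤ |t| := by
          rcases Set.mem_uIcc.mp hs with h | h
          · rw [abs_le]; constructor
            · linarith [h.1, neg_abs_le t, abs_nonneg t]
            · linarith [h.2, le_abs_self t]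
          · rw [abs_le]; constructor
            · linarith [h.1, neg_abs_le t]
            · linarith [h.2, le_abs_self t, abs_nonneg t]
        have hsδ : dist s 0 < δ := by rw [Real.dist_eq, sub_zero]; exact lt_of_le_of_lt hst ht
        calc ‖φ s‖ ≤ c * ‖s ^ n‖ := hbd hsδ
          _ = c * |s| ^ n := by rw [Real.norm_eq_abs, abs_pow]
          _ ≤ c * |t| ^ n := by
              apply mul_le_mul_of_nonneg_left (pow_le_pow_left₀ (abs_nonneg s) hst n) hc.le
      · exact convex_uIcc (0 : ℝ) t
      · exact Set.left_mem_uIcc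
      · exact Set.right_mem_uIcc
    rw [hg0, sub_zero, sub_zero] at key
    calc ‖g t‖ ≤ (c * |t| ^ n) * ‖t‖ := key
      _ = c * ‖t ^ (n + 1)‖ := by
          rw [Real.norm_eq_abs, Real.norm_eq_abs, abs_pow, pow_succ]; ring

/-- Central finite difference: if `f : ℝ → ℝ` is `n`-times continuously differentiable, then
`(1/h^n) ∑_{i=0}^n (-1)^i C(n,i) f(x + (n/2 - i) h)` tends to `f^(n)(x)` as `h → 0`, `h ≠ 0`. -/
theorem central_difference_tendsto_iteratedDeriv (f : ℝ → ℝ) (n : ℕ) (x : ℝ)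
    (hf : ContDiff ℝ n f) :
    Tendsto
      (fun h : ℝ => (1 / h ^ n) *
        ∑ i ∈ Finset.range (n + 1),
          (-1 : ℝ) ^ i * (n.choose i : ℝ) * f (x + ((n : ℝ) / 2 - (i : ℝ)) * h))
      (nhdsWithin 0 {0}ᶜ) (nhds (iteratedDeriv n f x)) := by
  set P : ℝ → ℝ := fun t => ∑ k ∈ range (n + 1), iteratedDeriv k f x * t ^ k / k.factorial
    with hP
  set R : ℝ → ℝ := fun t => f (x + t) - P t with hR
  have hRo : R =o[nhds 0] fun t : ℝ => t ^ n := taylor_peano n f hf x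
  set Rem : ℝ → ℝ := fun h => ∑ i ∈ range (n + 1),
    (-1 : ℝ) ^ i * (n.choose i : ℝ) * R (((n : ℝ) / 2 - (i : ℝ)) * h) with hRem
  have hRemo : Rem =o[nhds 0] fun h : ℝ => h ^ n := by
    apply Asymptotics.IsLittleO.fun_sum
    intro i _
    set a : ℝ := (n : ℝ) / 2 - (i : ℝ)
    have ht : Tendsto (fun h : ℝ => a * h) (nhds 0) (nhds 0) := by
      simpa using (continuous_mul_left a).tendsto (0 : ℝ)
    have h1 : (fun h : ℝ => R (a * h)) =o[nhds 0] fun h : ℝ => (a * h) ^ n :=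
      hRo.comp_tendsto ht
    have h2 : (fun h : ℝ => (a * h) ^ n) =O[nhds 0] fun h : ℝ => h ^ n := by
      simp only [mul_pow]
      exact isBigO_const_mul_self (a ^ n) (fun h : ℝ => h ^ n) (nhds 0)
    exact ((h1.trans_isBigO h2).const_mul_left _)
  have hRemT : Tendsto (fun h : ℝ => Rem h / h ^ n) (nhdsWithin 0 {0}ᶜ) (nhds 0) := by
    have := (hRemo.mono nhdsWithin_le_nhds : Rem =o[nhdsWithin 0 {0}ᶜ] fun h : ℝ => h ^ n)
    refine (isLittleO_iff_tendsto' ?_).mp this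
    filter_upwards [self_mem_nhdsWithin] with h hh
    intro h0
    exact absurd (pow_eq_zero_iff'.mp h0).1 hh
  have hPsum : ∀ h : ℝ, ∑ i ∈ range (n + 1),
      (-1 : ℝ) ^ i * (n.choose i : ℝ) * P (((n : ℝ) / 2 - (i : ℝ)) * h)
        = iteratedDeriv n f x * h ^ n := by
    intro h
    simp only [hP, mul_pow, Finset.mul_sum]
    rw [Finset.sum_comm]
    have step : ∀ k ∈ range (n + 1), ∑ i ∈ range (n + 1),
        (-1 : ℝ) ^ i * (n.choose i : ℝ) *
          (iteratedDeriv k f x * (((n : ℝ) / 2 - (i : ℝ)) ^ k * h ^ k) / k.factorial)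
        = if k = n then iteratedDeriv n f x * h ^ n else 0 := by
      intro k hk
      rw [Finset.mem_range] at hk
      have hk' : k ≤ n := by omega
      have hfac : (k.factorial : ℝ) ≠ 0 := by
        exact_mod_cast k.factorial_ne_zero
      have hfactor : ∑ i ∈ range (n + 1),
          (-1 : ℝ) ^ i * (n.choose i : ℝ) *
            (iteratedDeriv k f x * (((n : ℝ) / 2 - (i : ℝ)) ^ k * h ^ k) / k.factorial)
          = (iteratedDeriv k f x * h ^ k / k.factorial) *
            ∑ i ∈ range (n + 1), (-1 : ℝ) ^ i * (n.choose i : ℝ) *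
              ((n : ℝ) / 2 - (i : ℝ)) ^ k := by
        rw [Finset.mul_sum]
        exact Finset.sum_congr rfl fun i _ => by ring
      rw [hfactor, central_sum_pow n k hk']
      by_cases hkn : k = n
      · subst hkn
        rw [if_pos rfl, if_pos rfl]
        field_simp
      · rw [if_neg hkn, if_neg hkn, mul_zero]
    rw [Finset.sum_congr rfl step, Finset.sum_ite_eq' (range (n + 1)) n,
      if_pos (Finset.self_mem_range_succ n)]
  have heq : ∀ᶠ h in nhdsWithin 0 {0}ᶜ,
      (1 / h ^ n) * (∑ i ∈ Finset.range (n + 1),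
          (-1 : ℝ) ^ i * (n.choose i : ℝ) * f (x + ((n : ℝ) / 2 - (i : ℝ)) * h))
        = iteratedDeriv n f x + Rem h / h ^ n := by
    filter_upwards [self_mem_nhdsWithin] with h hh
    have hne : h ≠ 0 := by simpa using hh
    have hhn : h ^ n ≠ 0 := pow_ne_zero n hne
    have hsplit : ∑ i ∈ Finset.range (n + 1),
        (-1 : ℝ) ^ i * (n.choose i : ℝ) * f (x + ((n : ℝ) / 2 - (i : ℝ)) * h)
        = iteratedDeriv n f x * h ^ n + Rem h := by
      rw [← hPsum h, hRem, ← Finset.sum_add_distrib]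
      refine Finset.sum_congr rfl fun i _ => ?_
      rw [hR]
      ring
    rw [hsplit]
    field_simp
  have hT : Tendsto (fun h : ℝ => iteratedDeriv n f x + Rem h / h ^ n)
      (nhdsWithin 0 {0}ᶜ) (nhds (iteratedDeriv n f x)) := by
    simpa using hRemT.const_add (iteratedDeriv n f x)
  exact Tendsto.congr' (Filter.EventuallyEq.symm heq) hT
end
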